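/- Let S and U be nonempty finite sets, let ρ be a real with 0 ≤ ρ < 1, let c : S × U → ℝ, and let P : S × U × S → ℝ satisfy P(θ,u,η) ≥ 0 and Σ_{η∈S} P(θ,u,η) ≤ ρ for all θ ∈ S and u ∈ U. Define (T h)(θ) = min_{u∈U} [ c(θ,u) + Σ_{η∈S} P(θ,u,η) h(η) ]. Then T has a unique fixed point h* : S → ℝ, and for every initial function h₀ : S → ℝ the iterates h_{l+1} = T h_l converge to h*: for all l ≥ 0 and all θ ∈ S, |h_l(θ) − h*(θ)| ≤ ρ^l · max_{η∈S} |h₀(η) − h*(η)|, and hence h_l(θ) → h*(θ) as l → ∞. -/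
import Mathlib


open Finset Filter

theorem value_iteration_converges
    {S U : Type*} [Fintype S] [Nonempty S] [Fintype U] [Nonempty U]
    (ρ : ℝ) (hρ0 : 0 ≤ ρ) (hρ1 : ρ < 1)
    (c : S → U → ℝ) (P : S → U → S → ℝ)
    (hP0 : ∀ θ u η, 0 ≤ P θ u η)
    (hPρ : ∀ θ u, ∑ η, P θ u η ≤ ρ)
    (T : (S → ℝ) → S → ℝ)
    (hT : ∀ (h : S → ℝ) (θ : S),
      T h θ = Finset.univ.inf' Finset.univ_nonempty
        (fun u => c θ u + ∑ η, P θ u η * h η)) :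
    ∃ hstar : S → ℝ, T hstar = hstar ∧
      (∀ h : S → ℝ, T h = h → h = hstar) ∧
      (∀ (h₀ : S → ℝ) (l : ℕ) (θ : S),
        |T^[l] h₀ θ - hstar θ| ≤
          ρ ^ l * Finset.univ.sup' Finset.univ_nonempty
            (fun η => |h₀ η - hstar η|)) ∧
      (∀ (h₀ : S → ℝ) (θ : S),
        Tendsto (fun l => T^[l] h₀ θ) atTop (nhds (hstar θ))) := by
  classical
  set D : (S → ℝ) → (S → ℝ) → ℝ := fun g h =>
    Finset.univ.sup' Finset.univ_nonempty (fun η => |g η - h η|) with hDdef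
  have hDle : ∀ g h η, |g η - h η| ≤ D g h := fun g h η =>
    Finset.le_sup' (fun η => |g η - h η|) (Finset.mem_univ η)
  have hD0 : ∀ g h, 0 ≤ D g h := fun g h =>
    le_trans (abs_nonneg _) (hDle g h (Classical.arbitrary S))
  -- key contraction estimate
  have key : ∀ g h : S → ℝ, ∀ θ : S, |T g θ - T h θ| ≤ ρ * D g h := by
    intro g h θ
    have hfu : ∀ u, |(c θ u + ∑ η, P θ u η * g η) -
        (c θ u + ∑ η, P θ u η * h η)| ≤ ρ * D g h := by
      intro u
      have heq : (c θ u + ∑ η, P θ u η * g η) - (c θ u + ∑ η, P θ u η * h η)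
          = ∑ η, P θ u η * (g η - h η) := by
        simp [mul_sub, Finset.sum_sub_distrib]
      rw [heq]
      calc |∑ η, P θ u η * (g η - h η)|
          ≤ ∑ η, |P θ u η * (g η - h η)| := Finset.abs_sum_le_sum_abs _ _
        _ ≤ ∑ η, P θ u η * D g h := by
            refine Finset.sum_le_sum fun η _ => ?_
            rw [abs_mul, abs_of_nonneg (hP0 θ u η)]
            exact mul_le_mul_of_nonneg_left (hDle g h η) (hP0 θ u η)
        _ = (∑ η, P θ u η) * D g h := by rw [Finset.sum_mul]
        _ ≤ ρ * D g h := mul_le_mul_of_nonneg_right (hPρ θ u) (hD0 g h)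
    rw [hT, hT, abs_sub_le_iff]
    constructor
    · obtain ⟨u₀, _, hu₀⟩ := Finset.exists_mem_eq_inf' Finset.univ_nonempty
        (fun u => c θ u + ∑ η, P θ u η * h η)
      rw [sub_le_iff_le_add, add_comm]
      calc Finset.univ.inf' Finset.univ_nonempty
            (fun u => c θ u + ∑ η, P θ u η * g η)
          ≤ c θ u₀ + ∑ η, P θ u₀ η * g η := Finset.inf'_le _ (Finset.mem_univ u₀)
        _ ≤ (c θ u₀ + ∑ η, P θ u₀ η * h η) + ρ * D g h := by
            have := (abs_sub_le_iff.mp (hfu u₀)).1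
            linarith
        _ = Finset.univ.inf' Finset.univ_nonempty
            (fun u => c θ u + ∑ η, P θ u η * h η) + ρ * D g h := by rw [hu₀]
    · obtain ⟨u₀, _, hu₀⟩ := Finset.exists_mem_eq_inf' Finset.univ_nonempty
        (fun u => c θ u + ∑ η, P θ u η * g η)
      rw [sub_le_iff_le_add, add_comm]
      calc Finset.univ.inf' Finset.univ_nonempty
            (fun u => c θ u + ∑ η, P θ u η * h η)
          ≤ c θ u₀ + ∑ η, P θ u₀ η * h η := Finset.inf'_le _ (Finset.mem_univ u₀)
        _ ≤ (c θ u₀ + ∑ η, P θ u₀ η * g η) + ρ * D g h := by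
            have := (abs_sub_le_iff.mp (hfu u₀)).2
            linarith
        _ = Finset.univ.inf' Finset.univ_nonempty
            (fun u => c θ u + ∑ η, P θ u η * g η) + ρ * D g h := by rw [hu₀]
  -- T is a contraction for the sup metric on S → ℝ
  have hDdist : ∀ g h : S → ℝ, D g h ≤ dist g h := by
    intro g h
    refine Finset.sup'_le _ _ fun η _ => ?_
    rw [← Real.dist_eq]
    exact dist_le_pi_dist g h η
  have hlip : LipschitzWith ⟨ρ, hρ0⟩ T := by
    refine LipschitzWith.of_dist_le_mul fun g h => ?_
    show dist (T g) (T h) ≤ ρ * dist g h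
    rw [dist_pi_le_iff (mul_nonneg hρ0 dist_nonneg)]
    intro θ
    rw [Real.dist_eq]
    calc |T g θ - T h θ| ≤ ρ * D g h := key g h θ
      _ ≤ ρ * dist g h :=
          mul_le_mul_of_nonneg_left (hDdist g h) hρ0
  have hC : ContractingWith ⟨ρ, hρ0⟩ T := ⟨by exact_mod_cast hρ1, hlip⟩
  obtain ⟨hstar, hfix⟩ := hC.exists_fixedPoint (Classical.arbitrary _)
    (edist_ne_top _ _)
  have hfix' : T hstar = hstar := hfix.1
  have est : ∀ (h₀ : S → ℝ) (l : ℕ) (θ : S),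
      |T^[l] h₀ θ - hstar θ| ≤ ρ ^ l * D h₀ hstar := by
    intro h₀ l
    induction l with
    | zero => intro θ; simpa using hDle h₀ hstar θ
    | succ l ih =>
      intro θ
      have hsup : D (T^[l] h₀) hstar ≤ ρ ^ l * D h₀ hstar :=
        Finset.sup'_le _ _ fun η _ => ih η
      calc |T^[l + 1] h₀ θ - hstar θ|
          = |T (T^[l] h₀) θ - T hstar θ| := by
            rw [Function.iterate_succ_apply', hfix']
        _ ≤ ρ * D (T^[l] h₀) hstar := key _ _ θ
        _ ≤ ρ * (ρ ^ l * D h₀ hstar) :=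
            mul_le_mul_of_nonneg_left hsup hρ0
        _ = ρ ^ (l + 1) * D h₀ hstar := by ring
  refine ⟨hstar, hfix', ?_, est, ?_⟩
  · -- uniqueness
    intro h hh
    have hDc : D h hstar ≤ ρ * D h hstar := by
      refine Finset.sup'_le _ _ fun θ _ => ?_
      calc |h θ - hstar θ| = |T h θ - T hstar θ| := by rw [hh, hfix']
        _ ≤ ρ * D h hstar := key h hstar θ
    have : D h hstar ≤ 0 := by nlinarith [hD0 h hstar]
    funext θ
    have h1 : |h θ - hstar θ| ≤ 0 := le_trans (hDle h hstar θ) this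
    have := abs_nonneg (h θ - hstar θ)
    have : h θ - hstar θ = 0 := abs_eq_zero.mp (le_antisymm h1 this)
    linarith
  · -- convergence
    intro h₀ θ
    have hgeom : Tendsto (fun l : ℕ => ρ ^ l * D h₀ hstar) atTop (nhds 0) := by
      simpa using
        (tendsto_pow_atTop_nhds_zero_of_lt_one hρ0 hρ1).mul_const (D h₀ hstar)
    have hbound : ∀ l : ℕ, |T^[l] h₀ θ - hstar θ| ≤ ρ ^ l * D h₀ hstar :=
      fun l => est h₀ l θ
    have h0 : Tendsto (fun l : ℕ => T^[l] h₀ θ - hstar θ) atTop (nhds 0) :=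
      squeeze_zero_norm (fun l => by simpa [Real.norm_eq_abs] using hbound l) hgeom
    have := h0.add_const (hstar θ)
    simpa using this
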